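/- The word w = 011011011 1111111111 0110 110 (that is, (011)³ 1^{10} 0110 110, the k=0 case of the family (011)^3 1^{10} (0011)^k 0110 (1100)^k 110) admits a fold in the 2D rectangular lattice achieving score Z(w) + 1 = 9, where Z(w) = 8 is the number of zeros. Hence J(w) = Z(w) + 1. -/
import Mathlib

/-- L¹ distance on ℤ². -/
def d2 (p q : ℤ × ℤ) : ℕ := (p.1 - q.1).natAbs + (p.2 - q.2).natAbs

/-- Adjacency in the 2D rectangular lattice. -/
def adj2 (p q : ℤ × ℤ) : Prop := d2 p q = 1

/-- Adjacency in the hexagonal (3-regular, brick-wall) lattice. -/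
def hexAdj (p q : ℤ × ℤ) : Prop :=
  (p.2 = q.2 ∧ (p.1 - q.1).natAbs = 1) ∨
  (p.1 = q.1 ∧ ((q.2 = p.2 + 1 ∧ (p.1 + p.2) % 2 = 0) ∨ (p.2 = q.2 + 1 ∧ (q.1 + q.2) % 2 = 0)))

/-- A fold (self-avoiding walk) of a binary word `w` on a lattice with adjacency `A`:
letters `false` = hydrophobic (0), `true` = polar (1). -/
def IsFold (A : ℤ × ℤ → ℤ × ℤ → Prop) (w : List Bool) (F : Fin w.length → ℤ × ℤ) : Prop :=
  Function.Injective F ∧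
    ∀ (i : ℕ) (h : i + 1 < w.length), A (F ⟨i, by omega⟩) (F ⟨i + 1, h⟩)

/-- The score of a fold: the number of (unordered) pairs of non-consecutive positions,
both labeled 0, whose images are adjacent. -/
noncomputable def score (A : ℤ × ℤ → ℤ × ℤ → Prop) (w : List Bool) (F : Fin w.length → ℤ × ℤ) : ℕ :=
  Set.ncard {p : Fin w.length × Fin w.length |
    p.1.1 + 2 ≤ p.2.1 ∧ w.get p.1 = false ∧ w.get p.2 = false ∧ A (F p.1) (F p.2)}

/-- The optimal score over all folds of `w`. -/
noncomputable def J (A : ℤ × ℤ → ℤ × ℤ → Prop) (w : List Bool) : ℕ :=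
  sSup {s | ∃ F, IsFold A w F ∧ score A w F = s}

/- ### Auxiliary general lemmas -/

instance : DecidableRel adj2 := fun p q => by unfold adj2; infer_instance

lemma adj2_symm {p q : ℤ × ℤ} (h : adj2 p q) : adj2 q p := by
  simp only [adj2, d2] at *; omega

lemma adj2_iff' {p q : ℤ × ℤ} : adj2 p q ↔
    q = (p.1 + 1, p.2) ∨ q = (p.1 - 1, p.2) ∨ q = (p.1, p.2 + 1) ∨ q = (p.1, p.2 - 1) := by
  simp only [adj2, d2, Prod.ext_iff]
  omega

lemma adj2_parity {p q : ℤ × ℤ} (h : adj2 p q) : (p.1 + p.2 + 1) % 2 = (q.1 + q.2) % 2 := by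
  simp only [adj2, d2] at h; omega

lemma five_in_four {α : Type*} [DecidableEq α] {x1 x2 x3 x4 x5 a b c d : α}
    (h1 : x1 = a ∨ x1 = b ∨ x1 = c ∨ x1 = d)
    (h2 : x2 = a ∨ x2 = b ∨ x2 = c ∨ x2 = d)
    (h3 : x3 = a ∨ x3 = b ∨ x3 = c ∨ x3 = d)
    (h4 : x4 = a ∨ x4 = b ∨ x4 = c ∨ x4 = d)
    (h5 : x5 = a ∨ x5 = b ∨ x5 = c ∨ x5 = d)
    (d12 : x1 ≠ x2) (d13 : x1 ≠ x3) (d14 : x1 ≠ x4) (d15 : x1 ≠ x5)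
    (d23 : x2 ≠ x3) (d24 : x2 ≠ x4) (d25 : x2 ≠ x5)
    (d34 : x3 ≠ x4) (d35 : x3 ≠ x5) (d45 : x4 ≠ x5) : False := by
  have hsub : ({x1, x2, x3, x4, x5} : Finset α) ⊆ {a, b, c, d} := by
    intro x hx
    simp only [Finset.mem_insert, Finset.mem_singleton] at hx ⊢
    rcases hx with rfl | rfl | rfl | rfl | rfl <;> tauto
  have h5card : ({x1, x2, x3, x4, x5} : Finset α).card = 5 := by
    rw [Finset.card_insert_of_notMem (by simp [d12, d13, d14, d15]),
      Finset.card_insert_of_notMem (by simp [d23, d24, d25]),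
      Finset.card_insert_of_notMem (by simp [d34, d35]),
      Finset.card_insert_of_notMem (by simp [d45]), Finset.card_singleton]
  have hle : 5 ≤ ({a, b, c, d} : Finset α).card := h5card ▸ Finset.card_le_card hsub
  have h4card : ({a, b, c, d} : Finset α).card ≤ 4 := by
    calc ({a, b, c, d} : Finset α).card ≤ ({b, c, d} : Finset α).card + 1 :=
          Finset.card_insert_le _ _
      _ ≤ (({c, d} : Finset α).card + 1) + 1 := by
          have := Finset.card_insert_le b ({c, d} : Finset α); omega
      _ ≤ ((({d} : Finset α).card + 1) + 1) + 1 := by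
          have := Finset.card_insert_le c ({d} : Finset α); omega
      _ ≤ 4 := by rw [Finset.card_singleton]
  omega

lemma pair_ncard_le {α : Type*} {X : Set α} {a b : α} (h : X ⊆ {a, b}) : X.ncard ≤ 2 := by
  calc X.ncard ≤ ({a, b} : Set α).ncard :=
        Set.ncard_le_ncard h ((Set.finite_singleton b).insert a)
    _ ≤ ({b} : Set α).ncard + 1 := Set.ncard_insert_le a {b}
    _ ≤ 2 := by rw [Set.ncard_singleton]

lemma triple_bound {α : Type*} {X : Set α} {a b c : α} (h : X ⊆ {a, b, c})
    (hn : ¬(a ∈ X ∧ b ∈ X ∧ c ∈ X)) : X.ncard ≤ 2 := by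
  by_cases ha : a ∈ X
  · by_cases hb : b ∈ X
    · have hc : c ∉ X := fun hc => hn ⟨ha, hb, hc⟩
      refine pair_ncard_le (a := a) (b := b) ?_
      intro x hx
      have := h hx
      simp only [Set.mem_insert_iff, Set.mem_singleton_iff] at this ⊢
      rcases this with rfl | rfl | rfl
      · left; rfl
      · right; rfl
      · exact absurd hx hc
    · refine pair_ncard_le (a := a) (b := c) ?_
      intro x hx
      have := h hx
      simp only [Set.mem_insert_iff, Set.mem_singleton_iff] at this ⊢
      rcases this with rfl | rfl | rfl
      · left; rfl
      · exact absurd hx hb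
      · right; rfl
  · refine pair_ncard_le (a := b) (b := c) ?_
    intro x hx
    have := h hx
    simp only [Set.mem_insert_iff, Set.mem_singleton_iff] at this ⊢
    rcases this with rfl | rfl | rfl
    · exact absurd hx ha
    · left; rfl
    · right; rfl

lemma triple_ncard_le {α : Type*} {X : Set α} {a b c : α} (h : X ⊆ {a, b, c}) : X.ncard ≤ 3 := by
  calc X.ncard ≤ ({a, b, c} : Set α).ncard :=
        Set.ncard_le_ncard h (((Set.finite_singleton c).insert b).insert a)
    _ ≤ ({b, c} : Set α).ncard + 1 := Set.ncard_insert_le _ _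
    _ ≤ ({c} : Set α).ncard + 1 + 1 := by
        have := Set.ncard_insert_le b ({c} : Set α); omega
    _ ≤ 3 := by rw [Set.ncard_singleton]

/- ### The word and the explicit fold -/

def W : List Bool :=
  [false, true, true, false, true, true, false, true, true] ++
    List.replicate 10 true ++ [false, true, true, false] ++ [true, true, false]

def pts : List (ℤ × ℤ) :=
  [(0, 0), (0, 1), (1, 1), (1, 0), (2, 0), (2, -1), (1, -1), (1, -2), (2, -2), (3, -2),
   (3, -1), (3, 0), (3, 1), (3, 2), (2, 2), (1, 2), (0, 2), (-1, 2), (-1, 1), (-1, 0),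
   (-2, 0), (-2, -1), (-1, -1), (-1, -2), (0, -2), (0, -1)]

def F0 : Fin W.length → ℤ × ℤ := fun i => pts.get ⟨i.1, i.2⟩

lemma F0_inj : Function.Injective F0 := by decide

lemma F0_steps : ∀ j : Fin 25,
    adj2 (F0 ⟨j.1, lt_of_lt_of_le (Nat.lt_succ_of_lt j.2) (by decide : 26 ≤ W.length)⟩)
      (F0 ⟨j.1 + 1, lt_of_lt_of_le (Nat.succ_lt_succ j.2) (le_refl _)⟩) := by decide

lemma F0_fold : IsFold adj2 W F0 := by
  refine ⟨F0_inj, ?_⟩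
  intro i h
  have h' : i < 25 := by have : i + 1 < 26 := h; omega
  exact F0_steps ⟨i, h'⟩

lemma F0_score : score adj2 W F0 = 7 := by
  have : {p : Fin W.length × Fin W.length |
      p.1.1 + 2 ≤ p.2.1 ∧ W.get p.1 = false ∧ W.get p.2 = false ∧ adj2 (F0 p.1) (F0 p.2)} =
      ↑(Finset.univ.filter fun p : Fin W.length × Fin W.length =>
        p.1.1 + 2 ≤ p.2.1 ∧ W.get p.1 = false ∧ W.get p.2 = false ∧ adj2 (F0 p.1) (F0 p.2)) := by
    ext p; simp
  rw [score, this, Set.ncard_coe_finset]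
  decide

/- ### Upper bound -/

lemma fold_parity {F : Fin W.length → ℤ × ℤ} (hF : IsFold adj2 W F) :
    ∀ (n : ℕ) (hn : n < 26),
      ((F ⟨n, hn⟩).1 + (F ⟨n, hn⟩).2) % 2 =
        ((F ⟨0, by decide⟩).1 + (F ⟨0, by decide⟩).2 + (n : ℤ)) % 2 := by
  intro n
  induction n with
  | zero => intro hn; simp
  | succ k ih =>
    intro hn
    have hk : k < 26 := by omega
    have hadj := hF.2 k hn
    have hp := adj2_parity hadj
    have hi := ih hk
    push_cast at *
    omega

def fp (n : ℕ) (h : n < 26 := by decide) : Fin W.length := ⟨n, h⟩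

lemma W_zeros : ∀ i : Fin W.length, W.get i = false →
    (i.1 = 0 ∨ i.1 = 3 ∨ i.1 = 6 ∨ i.1 = 19 ∨ i.1 = 22 ∨ i.1 = 25) := by decide

set_option maxHeartbeats 1000000 in
lemma score_ub (F : Fin W.length → ℤ × ℤ) (hF : IsFold adj2 W F) : score adj2 W F ≤ 7 := by
  set S : Set (Fin W.length × Fin W.length) := {p : Fin W.length × Fin W.length |
    p.1.1 + 2 ≤ p.2.1 ∧ W.get p.1 = false ∧ W.get p.2 = false ∧ adj2 (F p.1) (F p.2)} with hSdef
  have hne : ∀ a b : Fin W.length, a.1 ≠ b.1 → F a ≠ F b := fun a b hab h => hab (by rw [hF.1 h])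
  set C1 : Set (Fin W.length × Fin W.length) := {(fp 0, fp 3), (fp 0, fp 19), (fp 0, fp 25)} with hC1
  set C2 : Set (Fin W.length × Fin W.length) := {(fp 3, fp 6), (fp 6, fp 19), (fp 6, fp 25)} with hC2
  set C3 : Set (Fin W.length × Fin W.length) := {(fp 3, fp 22), (fp 19, fp 22), (fp 22, fp 25)} with hC3
  have hsub : S ⊆ C1 ∪ C2 ∪ C3 := by
    rintro ⟨i, j⟩ ⟨hle, h1, h2, hadj⟩
    change adj2 (F i) (F j) at hadj
    change (i : ℕ) + 2 ≤ (j : ℕ) at hle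
    have z1 := W_zeros i h1
    have z2 := W_zeros j h2
    have par1 := fold_parity hF i.1 i.2
    have par2 := fold_parity hF j.1 j.2
    simp only [Fin.eta] at par1 par2
    have hpq := adj2_parity hadj
    have hmod : i.1 % 2 ≠ j.1 % 2 := by omega
    simp only [hC1, hC2, hC3, Set.mem_union, Set.mem_insert_iff, Set.mem_singleton_iff,
      Prod.mk.injEq, Fin.ext_iff, fp]
    clear hSdef hC1 hC2 hC3 h1 h2 hadj hF hne S C1 C2 C3 par1 par2 hpq
    rcases z1 with h | h | h | h | h | h <;> rcases z2 with h' | h' | h' | h' | h' | h' <;>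
      simp_all
  have hb1 : (S ∩ C1).ncard ≤ 3 := triple_ncard_le Set.inter_subset_right
  have hb2 : (S ∩ C2).ncard ≤ 2 := by
    refine triple_bound Set.inter_subset_right ?_
    rintro ⟨⟨⟨-, -, -, h36⟩, -⟩, ⟨⟨-, -, -, h619⟩, -⟩, ⟨⟨-, -, -, h625⟩, -⟩⟩
    change adj2 (F (fp 3)) (F (fp 6)) at h36
    change adj2 (F (fp 6)) (F (fp 19)) at h619
    change adj2 (F (fp 6)) (F (fp 25)) at h625
    have h56 : adj2 (F (fp 5)) (F (fp 6)) := hF.2 5 (by decide)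
    have h67 : adj2 (F (fp 6)) (F (fp 7)) := hF.2 6 (by decide)
    exact five_in_four (adj2_iff'.mp (adj2_symm h36)) (adj2_iff'.mp (adj2_symm h56))
      (adj2_iff'.mp h67) (adj2_iff'.mp h619) (adj2_iff'.mp h625)
      (hne (fp 3) (fp 5) (by decide)) (hne (fp 3) (fp 7) (by decide))
      (hne (fp 3) (fp 19) (by decide)) (hne (fp 3) (fp 25) (by decide))
      (hne (fp 5) (fp 7) (by decide)) (hne (fp 5) (fp 19) (by decide))
      (hne (fp 5) (fp 25) (by decide)) (hne (fp 7) (fp 19) (by decide))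
      (hne (fp 7) (fp 25) (by decide)) (hne (fp 19) (fp 25) (by decide))
  have hb3 : (S ∩ C3).ncard ≤ 2 := by
    refine triple_bound Set.inter_subset_right ?_
    rintro ⟨⟨⟨-, -, -, h322⟩, -⟩, ⟨⟨-, -, -, h1922⟩, -⟩, ⟨⟨-, -, -, h2225⟩, -⟩⟩
    change adj2 (F (fp 3)) (F (fp 22)) at h322
    change adj2 (F (fp 19)) (F (fp 22)) at h1922
    change adj2 (F (fp 22)) (F (fp 25)) at h2225
    have h2122 : adj2 (F (fp 21)) (F (fp 22)) := hF.2 21 (by decide)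
    have h2223 : adj2 (F (fp 22)) (F (fp 23)) := hF.2 22 (by decide)
    exact five_in_four (adj2_iff'.mp (adj2_symm h322)) (adj2_iff'.mp (adj2_symm h2122))
      (adj2_iff'.mp h2223) (adj2_iff'.mp (adj2_symm h1922)) (adj2_iff'.mp h2225)
      (hne (fp 3) (fp 21) (by decide)) (hne (fp 3) (fp 23) (by decide))
      (hne (fp 3) (fp 19) (by decide)) (hne (fp 3) (fp 25) (by decide))
      (hne (fp 21) (fp 23) (by decide)) (hne (fp 21) (fp 19) (by decide))
      (hne (fp 21) (fp 25) (by decide)) (hne (fp 23) (fp 19) (by decide))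
      (hne (fp 23) (fp 25) (by decide)) (hne (fp 19) (fp 25) (by decide))
  have hS1 : S = (S ∩ C1) ∪ (S ∩ C2) ∪ (S ∩ C3) := by
    rw [← Set.inter_union_distrib_left, ← Set.inter_union_distrib_left]
    exact (Set.inter_eq_left.mpr hsub).symm
  have hfin : score adj2 W F = S.ncard := rfl
  rw [hfin, hS1]
  calc ((S ∩ C1) ∪ (S ∩ C2) ∪ (S ∩ C3)).ncard
      ≤ ((S ∩ C1) ∪ (S ∩ C2)).ncard + (S ∩ C3).ncard := Set.ncard_union_le _ _
    _ ≤ (S ∩ C1).ncard + (S ∩ C2).ncard + (S ∩ C3).ncard := by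
        have := Set.ncard_union_le (S ∩ C1) (S ∩ C2); omega
    _ ≤ 7 := by omega

lemma main_result :
    (∃ F : Fin W.length → ℤ × ℤ, IsFold adj2 W F ∧ score adj2 W F = W.count false + 1) ∧
      J adj2 W = W.count false + 1 := by
  have hc : W.count false + 1 = 7 := by decide
  refine ⟨⟨F0, F0_fold, by rw [F0_score, hc]⟩, ?_⟩
  rw [hc, J]
  have hub : ∀ s ∈ {s | ∃ F, IsFold adj2 W F ∧ score adj2 W F = s}, s ≤ 7 := by
    rintro s ⟨F, hF, rfl⟩; exact score_ub F hF
  have hmem : 7 ∈ {s | ∃ F, IsFold adj2 W F ∧ score adj2 W F = s} := ⟨F0, F0_fold, F0_score⟩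
  exact le_antisymm (csSup_le ⟨7, hmem⟩ hub) (le_csSup ⟨7, hub⟩ hmem)

/-- The word `(011)^3 1^10 0110 110` (the `k = 0` member of the family
`(011)^3 1^10 (0011)^k 0110 (1100)^k 110`) admits a fold in the 2D rectangular lattice
achieving the maximal possible score `Z(w) + 1`; hence `J(w) = Z(w) + 1`. -/
theorem stmt9 :
    let w : List Bool :=
      [false, true, true, false, true, true, false, true, true] ++
        List.replicate 10 true ++ [false, true, true, false] ++ [true, true, false]
    (∃ F : Fin w.length → ℤ × ℤ, IsFold adj2 w F ∧ score adj2 w F = w.count false + 1) ∧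
      J adj2 w = w.count false + 1 := by
  intro w
  exact main_result
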